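/- Let A : H → 2^H be a set-valued operator and M an admissible preconditioner for A such that M⁻¹A is M-monotone. Then the operator T := (M+A)⁻¹M is M-firmly nonexpansive: for all u₁, u₂ ∈ H, ‖T u₁ − T u₂‖_M² + ‖(I−T)u₁ − (I−T)u₂‖_M² ≤ ‖u₁ − u₂‖_M². -/

import Mathlib

/-- If `M` is an admissible preconditioner for `A` and `M⁻¹A` is `M`-monotone, then
`T = (M+A)⁻¹M` is `M`-firmly nonexpansive. -/
theorem stmt2 {H : Type} [NormedAddCommGroup H] [InnerProductSpace ℝ H] [CompleteSpace H]
    (A : Set (H × H)) (M : H →L[ℝ] H) (T : H → H)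
    (hMsa : ∀ x y : H, (inner ℝ (M x) y : ℝ) = inner ℝ x (M y))
    (hMpos : ∀ x : H, 0 ≤ (inner ℝ (M x) x : ℝ))
    -- `T = (M+A)⁻¹ M` : for every `u`, `M u ∈ (M + A)(T u)` and `T` is single-valued
    (hT : ∀ u : H, (T u, M (u - T u)) ∈ A)
    (hTuniq : ∀ u v : H, (v, M (u - v)) ∈ A → v = T u)
    -- `M⁻¹A` is `M`-monotone
    (hmono : ∀ u v u' v' : H, (u, M v) ∈ A → (u', M v') ∈ A →
        0 ≤ (inner ℝ (M (v - v')) (u - u') : ℝ)) :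
    ∀ u₁ u₂ : H,
      (inner ℝ (M (T u₁ - T u₂)) (T u₁ - T u₂) : ℝ)
        + (inner ℝ (M ((u₁ - T u₁) - (u₂ - T u₂))) ((u₁ - T u₁) - (u₂ - T u₂)) : ℝ)
      ≤ (inner ℝ (M (u₁ - u₂)) (u₁ - u₂) : ℝ) := by
  intro u₁ u₂
  have hcross := hmono (T u₁) (u₁ - T u₁) (T u₂) (u₂ - T u₂) (hT u₁) (hT u₂)
  set a := T u₁ - T u₂ with ha
  set b := (u₁ - T u₁) - (u₂ - T u₂) with hb
  have hab : u₁ - u₂ = a + b := by rw [ha, hb]; abel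
  have hsym : (inner ℝ (M a) b : ℝ) = inner ℝ (M b) a := by
    rw [hMsa, real_inner_comm]
  rw [hab, map_add, inner_add_left, inner_add_right, inner_add_right]
  have : (0:ℝ) ≤ inner ℝ (M b) a := hcross
  linarith [hsym]
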